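/- arXiv:1703.06183 — 2 statements merged into one kernel-verified Lean document; each statement's English description precedes it below -/
import Mathlib

section
/- Let ψ ∈ H be a unit vector and 𝒩 = {𝒩_1,…,𝒩_K} a neighborhood structure. If the smallest real Lie subalgebra of the skew-Hermitian D×D matrices containing every u_{𝒩_k,ψ}, k = 1,…,K, equals u_ψ, then span(ψ) = ⋂_{k=1}^K Σ̄_{𝒩_k}(ψ). -/
open scoped BigOperators Matrix ComplexOrder

namespace QLS

variable {N : ℕ}

/-- Index type of the full multipartite Hilbert space `⊗ᵢ ℂ^{d i}`. -/
abbrev Idx (d : Fin N → ℕ) : Type := ∀ i, Fin (d i)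

/-- Index type of the Hilbert space `⊗_{i ∈ S} ℂ^{d i}` of a subset `S` of subsystems. -/
abbrev SIdx (d : Fin N → ℕ) (S : Finset (Fin N)) : Type := ∀ i : S, Fin (d i)

/-- Merge an index on `S` and an index on `Sᶜ` into a global index. -/
def merge (d : Fin N → ℕ) (S : Finset (Fin N)) (u : SIdx d S) (w : SIdx d Sᶜ) : Idx d :=
  fun i => if h : i ∈ S then u ⟨i, h⟩ else w ⟨i, Finset.mem_compl.mpr h⟩

/-- Partial trace over the complement of `S`: `Tr_{Sᶜ}`. -/
noncomputable def ptrace (d : Fin N → ℕ) (S : Finset (Fin N))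
    (M : Matrix (Idx d) (Idx d) ℂ) : Matrix (SIdx d S) (SIdx d S) ℂ :=
  fun u v => ∑ w : SIdx d Sᶜ, M (merge d S u w) (merge d S v w)

/-- `X` acts only on the subsystems in `S`, i.e. `X = Y ⊗ I_{Sᶜ}`. -/
def ActsOn (d : Fin N → ℕ) (S : Finset (Fin N)) (X : Matrix (Idx d) (Idx d) ℂ) : Prop :=
  ∃ Y : Matrix (SIdx d S) (SIdx d S) ℂ, ∀ (u u' : SIdx d S) (w w' : SIdx d Sᶜ),
    X (merge d S u w) (merge d S u' w') = if w = w' then Y u u' else 0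

/-- The rank-one projector `|ψ⟩⟨ψ|`. -/
noncomputable def proj (d : Fin N → ℕ) (ψ : Idx d → ℂ) : Matrix (Idx d) (Idx d) ℂ :=
  fun a b => ψ a * (starRingEnd ℂ) (ψ b)

/-- `ψ` is a unit vector. -/
def IsUnitVec (d : Fin N → ℕ) (ψ : Idx d → ℂ) : Prop :=
  ∑ a, Complex.normSq (ψ a) = 1

/-- Superoperators on the multipartite space. -/
abbrev Sop (d : Fin N → ℕ) : Type :=
  Matrix (Idx d) (Idx d) ℂ →ₗ[ℂ] Matrix (Idx d) (Idx d) ℂ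

/-- `E` is completely positive and trace preserving (Kraus form). -/
def IsCPTP (d : Fin N → ℕ) (E : Sop d) : Prop :=
  ∃ (m : ℕ) (K : Fin m → Matrix (Idx d) (Idx d) ℂ),
    (∀ ρ, E ρ = ∑ i, K i * ρ * (K i)ᴴ) ∧ (∑ i, (K i)ᴴ * K i = 1)

/-- `E` is a CPTP map whose Kraus operators all act only on `S`. -/
def IsNeighborhoodMap (d : Fin N → ℕ) (S : Finset (Fin N)) (E : Sop d) : Prop :=
  ∃ (m : ℕ) (K : Fin m → Matrix (Idx d) (Idx d) ℂ),
    (∀ i, ActsOn d S (K i)) ∧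
    (∀ ρ, E ρ = ∑ i, K i * ρ * (K i)ᴴ) ∧ (∑ i, (K i)ᴴ * K i = 1)

/-- A density matrix. -/
def IsDensity (d : Fin N → ℕ) (ρ : Matrix (Idx d) (Idx d) ℂ) : Prop :=
  ρ.PosSemidef ∧ ρ.trace = 1

/-- Sequential composition `E_{T-1} ∘ ⋯ ∘ E_1 ∘ E_0` (index `0` applied first). -/
def seqComp {V : Type*} [AddCommMonoid V] [Module ℂ V] :
    ∀ {T : ℕ}, (Fin T → (V →ₗ[ℂ] V)) → (V →ₗ[ℂ] V)
  | 0, _ => LinearMap.id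
  | T + 1, E => E (Fin.last T) ∘ₗ seqComp fun t => E t.castSucc

/-- Finite-time stabilizability of `ψ` w.r.t. the neighborhood structure `𝒩`. -/
def FTS (d : Fin N → ℕ) {K : ℕ} (𝒩 : Fin K → Finset (Fin N)) (ψ : Idx d → ℂ) : Prop :=
  ∃ (T : ℕ) (E : Fin T → Sop d),
    (∀ t, ∃ k, IsNeighborhoodMap d (𝒩 k) (E t)) ∧
    (∀ t, E t (proj d ψ) = proj d ψ) ∧
    (∀ σ, IsDensity d σ → seqComp E σ = proj d ψ)

/-- Robust finite-time stabilizability: any ordering of the maps prepares `ψ`. -/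
def RFTS (d : Fin N → ℕ) {K : ℕ} (𝒩 : Fin K → Finset (Fin N)) (ψ : Idx d → ℂ) : Prop :=
  ∃ (T : ℕ) (E : Fin T → Sop d),
    (∀ t, ∃ k, IsNeighborhoodMap d (𝒩 k) (E t)) ∧
    (∀ t, E t (proj d ψ) = proj d ψ) ∧
    (∀ π : Equiv.Perm (Fin T), ∀ σ, IsDensity d σ → seqComp (fun t => E (π t)) σ = proj d ψ)

/-- The Schmidt span of `ψ` on `S`: the range of the reduced state `Tr_{Sᶜ}|ψ⟩⟨ψ|`. -/
noncomputable def schmidtSpan (d : Fin N → ℕ) (S : Finset (Fin N)) (ψ : Idx d → ℂ) :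
    Submodule ℂ (SIdx d S → ℂ) :=
  LinearMap.range (Matrix.mulVecLin (ptrace d S (proj d ψ)))

/-- Slicing a global vector along a fixed index of `Sᶜ` (linear in the vector). -/
def sliceMap (d : Fin N → ℕ) (S : Finset (Fin N)) (w : SIdx d Sᶜ) :
    (Idx d → ℂ) →ₗ[ℂ] (SIdx d S → ℂ) where
  toFun v := fun u => v (merge d S u w)
  map_add' _ _ := rfl
  map_smul' _ _ := rfl

/-- The extended Schmidt span `Σ̄_S(ψ) = Σ_S(ψ) ⊗ H_{Sᶜ}`, described as the set of vectors
all of whose slices along `Sᶜ` lie in the Schmidt span. -/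
noncomputable def extSchmidtSpan (d : Fin N → ℕ) (S : Finset (Fin N)) (ψ : Idx d → ℂ) :
    Submodule ℂ (Idx d → ℂ) :=
  ⨅ w : SIdx d Sᶜ, (schmidtSpan d S ψ).comap (sliceMap d S w)

/-- `P` is the orthogonal projection matrix onto the subspace `V` (Hermitian idempotent
with range `V`). -/
def IsOrthProjOnto {ι : Type*} [Fintype ι] [DecidableEq ι]
    (P : Matrix ι ι ℂ) (V : Submodule ℂ (ι → ℂ)) : Prop :=
  Pᴴ = P ∧ P * P = P ∧ LinearMap.range P.mulVecLin = V

/-- The neighborhood expansion `A^𝒩` of a set of subsystems. -/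
def expand {K : ℕ} (𝒩 : Fin K → Finset (Fin N)) (A : Finset (Fin N)) : Finset (Fin N) :=
  Finset.univ.biUnion fun k => if (𝒩 k ∩ A).Nonempty then 𝒩 k else ∅

/-- Standard sesquilinear dot product. -/
noncomputable def dotc {ι : Type*} [Fintype ι] (u v : ι → ℂ) : ℂ :=
  ∑ a, (starRingEnd ℂ) (u a) * v a

/-- Slicing a global vector along a single site `i`, other coordinates fixed by `a`. -/
def sliceAt (d : Fin N → ℕ) (i : Fin N) (a : Idx d) :
    (Idx d → ℂ) →ₗ[ℂ] (Fin (d i) → ℂ) where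
  toFun v := fun x => v (Function.update a i x)
  map_add' _ _ := rfl
  map_smul' _ _ := rfl

/-- The tensor product `⊗ᵢ tᵢ` of local subspaces, as a subspace of the global space:
the set of vectors all of whose single-site slices lie in the local subspaces. -/
noncomputable def tensorSub (d : Fin N → ℕ) (t : ∀ i, Submodule ℂ (Fin (d i) → ℂ)) :
    Submodule ℂ (Idx d → ℂ) :=
  ⨅ i, ⨅ a : Idx d, (t i).comap (sliceAt d i a)

open Classical in
/-- The operator `X` on the `j`-th factor, amplified by the identity on all other factors. -/
noncomputable def factorMat {M : ℕ} (m : Fin M → ℕ) (j : Fin M)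
    (X : Matrix (Fin (m j)) (Fin (m j)) ℂ) :
    Matrix (∀ l, Fin (m l)) (∀ l, Fin (m l)) ℂ :=
  fun a b => if (∀ l, l ≠ j → a l = b l) then X (a j) (b j) else 0

/-- Partial trace onto a single site `i`. -/
noncomputable def ptrace1 (d : Fin N → ℕ) (i : Fin N) (M : Matrix (Idx d) (Idx d) ℂ) :
    Matrix (Fin (d i)) (Fin (d i)) ℂ :=
  fun x y => ∑ a : Idx d, if a i = x then M a (Function.update a i y) else 0

/-- Local support `H̃ᵢ`: the range of the single-site reduced state of `ψ`. -/
noncomputable def localSupp (d : Fin N → ℕ) (ψ : Idx d → ℂ) (i : Fin N) :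
    Submodule ℂ (Fin (d i) → ℂ) :=
  LinearMap.range (Matrix.mulVecLin (ptrace1 d i (proj d ψ)))

/-- Set of skew-Hermitian matrices commuting with `|ψ⟩⟨ψ|` (the Lie algebra `u_ψ`). -/
noncomputable def stabSet (d : Fin N → ℕ) (ψ : Idx d → ℂ) :
    Set (Matrix (Idx d) (Idx d) ℂ) :=
  {X | Xᴴ = -X ∧ X * proj d ψ = proj d ψ * X}

/-- The Lie algebra `u_{𝒩ₖ,ψ}` of skew-Hermitian stabilizers acting only on `S`. -/
noncomputable def nstabSet (d : Fin N → ℕ) (S : Finset (Fin N)) (ψ : Idx d → ℂ) :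
    Set (Matrix (Idx d) (Idx d) ℂ) :=
  {X | (Xᴴ = -X ∧ X * proj d ψ = proj d ψ * X) ∧ ActsOn d S X}

attribute [local instance 100] LieRing.ofAssociativeRing

/-- The unitary generation property: the real Lie algebra generated by the
neighborhood stabilizer algebras is the full stabilizer algebra `u_ψ`. -/
noncomputable def UnitaryGenProp (d : Fin N → ℕ) {K : ℕ} (𝒩 : Fin K → Finset (Fin N))
    (ψ : Idx d → ℂ) : Prop :=
  ((LieSubalgebra.lieSpan ℝ (Matrix (Idx d) (Idx d) ℂ)
      (⋃ k, nstabSet d (𝒩 k) ψ)) : Set (Matrix (Idx d) (Idx d) ℂ)) = stabSet d ψ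

/-- The unitary stabilizer group `U_ψ` (as a set of matrices). -/
noncomputable def uStab (d : Fin N → ℕ) (ψ : Idx d → ℂ) : Set (Matrix (Idx d) (Idx d) ℂ) :=
  {U | U ∈ Matrix.unitaryGroup (Idx d) ℂ ∧ U * proj d ψ * Uᴴ = proj d ψ}

/-- The neighborhood unitary stabilizer group `U_{𝒩ₖ,ψ}` (as a set of matrices). -/
noncomputable def uNStab (d : Fin N → ℕ) (S : Finset (Fin N)) (ψ : Idx d → ℂ) :
    Set (Matrix (Idx d) (Idx d) ℂ) :=
  {U | (U ∈ Matrix.unitaryGroup (Idx d) ℂ ∧ U * proj d ψ * Uᴴ = proj d ψ) ∧ ActsOn d S U}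

/-- `x log x` with the convention `0 log 0 = 0`. -/
noncomputable def entAux (x : ℝ) : ℝ := if x = 0 then 0 else x * Real.log x

open Classical in
/-- Von Neumann entropy of a (Hermitian) matrix. -/
noncomputable def vnEntropy {n : Type*} [Fintype n] [DecidableEq n]
    (σ : Matrix n n ℂ) : ℝ :=
  if h : σ.IsHermitian then -∑ i, entAux (h.eigenvalues i) else 0



/-! ### Auxiliary material for Statement 4 -/

section Aux

variable {N : ℕ} (d : Fin N → ℕ) (S : Finset (Fin N))

/-- Restriction of a global index to `S`. -/
def resS (a : Idx d) : SIdx d S := fun i => a i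

/-- Restriction of a global index to `Sᶜ`. -/
def resC (a : Idx d) : SIdx d Sᶜ := fun i => a i

lemma merge_resS (u : SIdx d S) (w : SIdx d Sᶜ) : resS d S (merge d S u w) = u := by
  funext i
  show (if h : (i : Fin N) ∈ S then u ⟨i, h⟩ else w ⟨i, Finset.mem_compl.mpr h⟩) = u i
  rw [dif_pos i.2]

lemma merge_resC (u : SIdx d S) (w : SIdx d Sᶜ) : resC d S (merge d S u w) = w := by
  funext i
  have hi : (i : Fin N) ∉ S := Finset.mem_compl.mp i.2
  show (if h : (i : Fin N) ∈ S then u ⟨i, h⟩ else w ⟨i, Finset.mem_compl.mpr h⟩) = w i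
  rw [dif_neg hi]

lemma merge_res (a : Idx d) : merge d S (resS d S a) (resC d S a) = a := by
  funext i
  show (if h : i ∈ S then resS d S a ⟨i, h⟩ else resC d S a ⟨i, Finset.mem_compl.mpr h⟩) = a i
  by_cases h : i ∈ S
  · rw [dif_pos h]; rfl
  · rw [dif_neg h]; rfl

/-- The canonical equivalence `H_S × H_{Sᶜ} ≃ H` on index types. -/
def mergeEquiv : (SIdx d S × SIdx d Sᶜ) ≃ Idx d where
  toFun p := merge d S p.1 p.2
  invFun a := (resS d S a, resC d S a)
  left_inv p := by
    obtain ⟨u, w⟩ := p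
    simp only [merge_resS, merge_resC]
  right_inv a := merge_res d S a

/-- The "slice matrix" of `ψ`: `A u w = ψ (u ⊗ w)`. -/
noncomputable def aMat (ψ : Idx d → ℂ) : Matrix (SIdx d S) (SIdx d Sᶜ) ℂ :=
  Matrix.of fun u w => ψ (merge d S u w)

lemma ptrace_proj (ψ : Idx d → ℂ) :
    ptrace d S (proj d ψ) = aMat d S ψ * (aMat d S ψ)ᴴ := by
  ext u v
  rw [Matrix.mul_apply]
  refine Finset.sum_congr rfl fun w _ => ?_
  rfl

lemma schmidtSpan_eq_range (ψ : Idx d → ℂ) :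
    schmidtSpan d S ψ = LinearMap.range (aMat d S ψ).mulVecLin := by
  have hle : LinearMap.range (aMat d S ψ * (aMat d S ψ)ᴴ).mulVecLin ≤
      LinearMap.range (aMat d S ψ).mulVecLin := by
    rintro _ ⟨x, rfl⟩
    exact ⟨(aMat d S ψ)ᴴ.mulVec x, by
      simp [Matrix.mulVecLin_apply, Matrix.mulVec_mulVec]⟩
  have hrank := Matrix.rank_self_mul_conjTranspose (aMat d S ψ)
  rw [schmidtSpan, ptrace_proj]
  exact Submodule.eq_of_le_of_finrank_eq hle hrank

lemma slice_psi_mem (ψ : Idx d → ℂ) (w : SIdx d Sᶜ) :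
    sliceMap d S w ψ ∈ schmidtSpan d S ψ := by
  rw [schmidtSpan_eq_range, Matrix.range_mulVecLin]
  refine Submodule.subset_span ⟨w, ?_⟩
  funext u
  rfl

lemma psi_mem_ext (ψ : Idx d → ℂ) : ψ ∈ extSchmidtSpan d S ψ := by
  rw [extSchmidtSpan]
  rw [Submodule.mem_iInf]
  intro w
  exact slice_psi_mem d S ψ w

lemma sum_conj_mul_self (ψ : Idx d → ℂ) (hunit : IsUnitVec d ψ) :
    ∑ a : Idx d, (starRingEnd ℂ) (ψ a) * ψ a = 1 := by
  have : ∀ a : Idx d, (starRingEnd ℂ) (ψ a) * ψ a = (Complex.normSq (ψ a) : ℂ) := by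
    intro a
    rw [mul_comm, Complex.mul_conj]
  rw [Finset.sum_congr rfl fun a _ => this a]
  rw [← Complex.ofReal_sum, hunit, Complex.ofReal_one]

/-- Key lemma: an operator acting only on `S` that commutes with `|ψ⟩⟨ψ|` acts as a
scalar on the extended Schmidt span `Σ̄_S(ψ)`. -/
lemma actsOn_scalar (ψ : Idx d → ℂ) (hunit : IsUnitVec d ψ)
    {X : Matrix (Idx d) (Idx d) ℂ} (hcomm : X * proj d ψ = proj d ψ * X)
    (hacts : ActsOn d S X) :
    ∃ c : ℂ, ∀ v ∈ extSchmidtSpan d S ψ, X.mulVec v = c • v := by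
  obtain ⟨Y, hY⟩ := hacts
  set c : ℂ := ∑ w' : SIdx d Sᶜ, ∑ u' : SIdx d S,
      ψ (merge d S u' w') * ∑ v : SIdx d S,
        (starRingEnd ℂ) (ψ (merge d S v w')) * Y v u' with hcdef
  -- entrywise form of the commutation relation
  have hE : ∀ (u u' : SIdx d S) (w w' : SIdx d Sᶜ),
      (∑ v, Y u v * ψ (merge d S v w)) * (starRingEnd ℂ) (ψ (merge d S u' w'))
        = ψ (merge d S u w) * ∑ v, (starRingEnd ℂ) (ψ (merge d S v w')) * Y v u' := by
    intro u u' w w'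
    have h := Matrix.ext_iff.mpr hcomm (merge d S u w) (merge d S u' w')
    rw [Matrix.mul_apply, Matrix.mul_apply,
      ← Equiv.sum_comp (mergeEquiv d S)
        (fun b => X (merge d S u w) b * proj d ψ b (merge d S u' w')),
      ← Equiv.sum_comp (mergeEquiv d S)
        (fun b => proj d ψ (merge d S u w) b * X b (merge d S u' w')),
      Fintype.sum_prod_type, Fintype.sum_prod_type] at h
    simp only [mergeEquiv, Equiv.coe_fn_mk, hY, proj, ite_mul, zero_mul, mul_ite, mul_zero,
      Finset.sum_ite_eq, Finset.sum_ite_eq', Finset.mem_univ, if_true] at h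
    rw [Finset.sum_mul, Finset.mul_sum]
    calc ∑ v, Y u v * ψ (merge d S v w) * (starRingEnd ℂ) (ψ (merge d S u' w'))
        = ∑ v, Y u v * (ψ (merge d S v w) * (starRingEnd ℂ) (ψ (merge d S u' w'))) := by
          exact Finset.sum_congr rfl fun v _ => by ring
      _ = ∑ v, ψ (merge d S u w) * (starRingEnd ℂ) (ψ (merge d S v w')) * Y v u' := h
      _ = ∑ v, ψ (merge d S u w) * ((starRingEnd ℂ) (ψ (merge d S v w')) * Y v u') := by
          exact Finset.sum_congr rfl fun v _ => by ring
  -- `Y` acts as `c` on every slice of `ψ`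
  have hkey : ∀ (w : SIdx d Sᶜ) (u : SIdx d S),
      ∑ v, Y u v * ψ (merge d S v w) = c * ψ (merge d S u w) := by
    intro w u
    have h2 : ∀ a : Idx d,
        (∑ v, Y u v * ψ (merge d S v w)) * ((starRingEnd ℂ) (ψ a) * ψ a)
          = ψ (merge d S u w) * (ψ a * ∑ v : SIdx d S,
              (starRingEnd ℂ) (ψ (merge d S v (resC d S a))) * Y v (resS d S a)) := by
      intro a
      have h := hE u (resS d S a) w (resC d S a)
      rw [merge_res d S a] at h
      calc (∑ v, Y u v * ψ (merge d S v w)) * ((starRingEnd ℂ) (ψ a) * ψ a)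
          = ((∑ v, Y u v * ψ (merge d S v w)) * (starRingEnd ℂ) (ψ a)) * ψ a := by ring
        _ = (ψ (merge d S u w) * ∑ v : SIdx d S,
              (starRingEnd ℂ) (ψ (merge d S v (resC d S a))) * Y v (resS d S a)) * ψ a := by
            rw [h]
        _ = ψ (merge d S u w) * (ψ a * ∑ v : SIdx d S,
              (starRingEnd ℂ) (ψ (merge d S v (resC d S a))) * Y v (resS d S a)) := by ring
    have h3 : (∑ v, Y u v * ψ (merge d S v w)) * ∑ a : Idx d, (starRingEnd ℂ) (ψ a) * ψ a
        = ψ (merge d S u w) * ∑ a : Idx d, ψ a * ∑ v : SIdx d S,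
            (starRingEnd ℂ) (ψ (merge d S v (resC d S a))) * Y v (resS d S a) := by
      rw [Finset.mul_sum, Finset.mul_sum]
      exact Finset.sum_congr rfl fun a _ => h2 a
    rw [sum_conj_mul_self d ψ hunit, mul_one] at h3
    have h4 : ∑ a : Idx d, ψ a * ∑ v : SIdx d S,
        (starRingEnd ℂ) (ψ (merge d S v (resC d S a))) * Y v (resS d S a) = c := by
      rw [← Equiv.sum_comp (mergeEquiv d S) (fun a => ψ a * ∑ v : SIdx d S,
        (starRingEnd ℂ) (ψ (merge d S v (resC d S a))) * Y v (resS d S a)),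
        Fintype.sum_prod_type]
      simp only [mergeEquiv, Equiv.coe_fn_mk, merge_resS, merge_resC]
      rw [hcdef, Finset.sum_comm]
    rw [h3, h4, mul_comm]
  -- `Y` acts as `c` on the Schmidt span
  have hYρ : ∀ x ∈ schmidtSpan d S ψ, Y.mulVec x = c • x := by
    rw [schmidtSpan_eq_range]
    rintro _ ⟨z, rfl⟩
    simp only [Matrix.mulVecLin_apply]
    rw [Matrix.mulVec_mulVec]
    have hYA : Y * aMat d S ψ = c • aMat d S ψ := by
      ext u w
      rw [Matrix.mul_apply]
      simpa [aMat] using hkey w u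
    rw [hYA, ← Matrix.smul_mulVec]
  -- conclude on the extended Schmidt span
  refine ⟨c, fun v hv => ?_⟩
  rw [extSchmidtSpan, Submodule.mem_iInf] at hv
  funext a
  have ha := merge_res d S a
  have hsl := hYρ _ (hv (resC d S a))
  have hX' : ∀ (u' : SIdx d S) (w' : SIdx d Sᶜ),
      X a (merge d S u' w') = if resC d S a = w' then Y (resS d S a) u' else 0 := by
    intro u' w'
    conv_lhs => rw [← ha]
    rw [hY]
  calc X.mulVec v a
      = ∑ p : SIdx d S × SIdx d Sᶜ,
          X a (merge d S p.1 p.2) * v (merge d S p.1 p.2) :=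
        (Equiv.sum_comp (mergeEquiv d S) (fun b => X a b * v b)).symm
    _ = ∑ u' : SIdx d S, ∑ w' : SIdx d Sᶜ,
          (if resC d S a = w' then Y (resS d S a) u' else 0) * v (merge d S u' w') := by
        rw [Fintype.sum_prod_type]
        exact Finset.sum_congr rfl fun u' _ => Finset.sum_congr rfl fun w' _ => by rw [hX']
    _ = ∑ u' : SIdx d S, Y (resS d S a) u' * v (merge d S u' (resC d S a)) := by
        refine Finset.sum_congr rfl fun u' _ => ?_
        simp only [ite_mul, zero_mul]
        rw [Finset.sum_ite_eq (Finset.univ : Finset (SIdx d Sᶜ)) (resC d S a)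
          (fun w' => Y (resS d S a) u' * v (merge d S u' w'))]
        simp
    _ = c * v a := by
        have h5 := congrFun hsl (resS d S a)
        simp only [Matrix.mulVec, dotProduct, sliceMap, LinearMap.coe_mk,
          AddHom.coe_mk, Pi.smul_apply, smul_eq_mul] at h5
        rw [h5, ha]
    _ = (c • v) a := rfl

/-- The set of matrices acting as a scalar on a fixed subspace `W` forms a real
Lie subalgebra of the matrix algebra. -/
noncomputable def scalarOn (W : Submodule ℂ (Idx d → ℂ)) :
    LieSubalgebra ℝ (Matrix (Idx d) (Idx d) ℂ) where
  carrier := {X | ∃ c : ℂ, ∀ v ∈ W, X.mulVec v = c • v}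
  add_mem' := by
    rintro X X' ⟨c, hc⟩ ⟨c', hc'⟩
    refine ⟨c + c', fun v hv => ?_⟩
    rw [Matrix.add_mulVec, hc v hv, hc' v hv, add_smul]
  zero_mem' := ⟨0, fun v _ => by rw [Matrix.zero_mulVec, zero_smul]⟩
  smul_mem' := by
    rintro r X ⟨c, hc⟩
    refine ⟨(r : ℂ) * c, fun v hv => ?_⟩
    have : (r • X : Matrix (Idx d) (Idx d) ℂ) = (r : ℂ) • X := by
      ext a b
      show r • X a b = (r : ℂ) * X a b
      exact Complex.real_smul
    rw [this, Matrix.smul_mulVec, hc v hv, smul_smul]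
  lie_mem' := by
    rintro X X' ⟨c, hc⟩ ⟨c', hc'⟩
    refine ⟨0, fun v hv => ?_⟩
    rw [Ring.lie_def, Matrix.sub_mulVec, ← Matrix.mulVec_mulVec, ← Matrix.mulVec_mulVec]
    rw [hc' v hv, Matrix.mulVec_smul, hc v hv, Matrix.mulVec_smul, hc' v hv]
    rw [smul_smul, smul_smul, mul_comm c' c, sub_self, zero_smul]

lemma proj_conjTranspose (ψ : Idx d → ℂ) : (proj d ψ)ᴴ = proj d ψ := by
  ext a b
  show star (ψ b * (starRingEnd ℂ) (ψ a)) = ψ a * (starRingEnd ℂ) (ψ b)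
  rw [star_mul', starRingEnd_apply, starRingEnd_apply, star_star]
  exact mul_comm _ _

lemma proj_mulVec (ψ : Idx d → ℂ) (v : Idx d → ℂ) :
    (proj d ψ).mulVec v = (dotc ψ v) • ψ := by
  funext a
  simp only [Matrix.mulVec, dotProduct, proj, dotc, Pi.smul_apply, smul_eq_mul,
    Finset.sum_mul]
  exact Finset.sum_congr rfl fun b _ => by ring

lemma dotc_self (ψ : Idx d → ℂ) (hunit : IsUnitVec d ψ) : dotc ψ ψ = 1 := by
  rw [dotc]
  exact sum_conj_mul_self d ψ hunit

lemma psi_ne_zero (ψ : Idx d → ℂ) (hunit : IsUnitVec d ψ) : ψ ≠ 0 := by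
  intro h
  rw [IsUnitVec, h] at hunit
  simp at hunit

end Aux

/-- Proposition 5: the unitary generation property implies the
quasi-local stabilizability condition `span(ψ) = ⋂ₖ Σ̄_{𝒩ₖ}(ψ)`. -/
theorem qls_of_unitary_generation {N K : ℕ} (d : Fin N → ℕ)
    (𝒩 : Fin K → Finset (Fin N)) (ψ : Idx d → ℂ) (hunit : IsUnitVec d ψ)
    (hgen : UnitaryGenProp d 𝒩 ψ) :
    Submodule.span ℂ {ψ} = ⨅ k, extSchmidtSpan d (𝒩 k) ψ := by
  set W : Submodule ℂ (Idx d → ℂ) := ⨅ k, extSchmidtSpan d (𝒩 k) ψ with hW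
  have hψW : ψ ∈ W := Submodule.mem_iInf _ |>.mpr fun k => psi_mem_ext d (𝒩 k) ψ
  refine le_antisymm ((Submodule.span_singleton_le_iff_mem _ _).mpr hψW) ?_
  -- the generated Lie algebra acts by scalars on W
  have hle : LieSubalgebra.lieSpan ℝ (Matrix (Idx d) (Idx d) ℂ)
      (⋃ k, nstabSet d (𝒩 k) ψ) ≤ scalarOn d W := by
    rw [LieSubalgebra.lieSpan_le]
    rintro X hX
    rw [Set.mem_iUnion] at hX
    obtain ⟨k, ⟨⟨_, hXcomm⟩, hXacts⟩⟩ := hX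
    obtain ⟨c, hc⟩ := actsOn_scalar d (𝒩 k) ψ hunit hXcomm hXacts
    exact ⟨c, fun v hv => hc v ((Submodule.mem_iInf _).mp hv k)⟩
  -- `i |ψ⟩⟨ψ|` is in the stabilizer algebra
  have hstab : Complex.I • proj d ψ ∈ stabSet d ψ := by
    constructor
    · rw [Matrix.conjTranspose_smul, proj_conjTranspose]
      rw [show (star Complex.I) = -Complex.I from by
        rw [Complex.star_def, Complex.conj_I]]
      rw [neg_smul]
    · rw [Matrix.smul_mul, Matrix.mul_smul]
  have hmem : Complex.I • proj d ψ ∈ LieSubalgebra.lieSpan ℝ (Matrix (Idx d) (Idx d) ℂ)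
      (⋃ k, nstabSet d (𝒩 k) ψ) := by
    have : Complex.I • proj d ψ ∈ ((LieSubalgebra.lieSpan ℝ (Matrix (Idx d) (Idx d) ℂ)
        (⋃ k, nstabSet d (𝒩 k) ψ)) : Set (Matrix (Idx d) (Idx d) ℂ)) := by
      rw [hgen]; exact hstab
    exact this
  obtain ⟨c, hc⟩ := hle hmem
  -- evaluate on ψ to find c = i
  have hPψ : (proj d ψ).mulVec ψ = ψ := by
    rw [proj_mulVec, dotc_self d ψ hunit, one_smul]
  have hcψ := hc ψ hψW
  rw [Matrix.smul_mulVec, hPψ] at hcψ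
  have hci : c = Complex.I := by
    obtain ⟨a, ha⟩ := Function.ne_iff.mp (psi_ne_zero d ψ hunit)
    have := congrFun hcψ a
    simp only [Pi.smul_apply, smul_eq_mul] at this
    have hψa : ψ a ≠ 0 := by simpa using ha
    field_simp at this
    exact this.symm
  -- conclude: every v ∈ W is a multiple of ψ
  intro v hv
  have hcv := hc v hv
  rw [Matrix.smul_mulVec, proj_mulVec, hci] at hcv
  have h6 : (dotc ψ v) • ψ = v :=
    smul_right_injective (Idx d → ℂ) Complex.I_ne_zero hcv
  rw [← h6]
  exact Submodule.smul_mem _ _ (Submodule.mem_span_singleton_self ψ)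

end QLS
end

section
/- Let ψ ∈ H be a unit vector that is RFTS with respect to a neighborhood structure 𝒩, let A ⊆ {1,…,N}, and let A^𝒩 = ⋃{𝒩_k ∈ 𝒩 : 𝒩_k ∩ A ≠ ∅} be its neighborhood expansion. Then for every CPTP map M on H whose Kraus operators act only on A, there exist finitely many CPTP maps E_1,…,E_l, each an 𝒩_k-neighborhood map for some 𝒩_k ∈ 𝒩 with 𝒩_k ∩ A ≠ ∅ (hence 𝒩_k ⊆ A^𝒩, so each acts only on A^𝒩), such that (E_l ∘ ⋯ ∘ E_1 ∘ M)(|ψ⟩⟨ψ|) = |ψ⟩⟨ψ|. (Recoverability: any quasi-local perturbation of the target state can be corrected by neighborhood maps supported on the neighborhood expansion of the perturbed region.) -/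
open scoped BigOperators Matrix ComplexOrder

namespace QLS

variable {N : ℕ}

attribute [local instance] LieRing.ofAssociativeRing

section Aux

lemma merge_self (d : Fin N → ℕ) (S : Finset (Fin N)) (a : Idx d) :
    merge d S (fun i => a i) (fun i => a i) = a := by
  funext i; by_cases h : i ∈ S <;> simp [merge, h]

lemma actsOn_apply (d : Fin N → ℕ) (S : Finset (Fin N))
    {X : Matrix (Idx d) (Idx d) ℂ} {XS : Matrix (SIdx d S) (SIdx d S) ℂ}
    (hX : ∀ (u u' : SIdx d S) (w w' : SIdx d Sᶜ),
      X (merge d S u w) (merge d S u' w') = if w = w' then XS u u' else 0)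
    (a b : Idx d) :
    X a b = if (∀ i, i ∉ S → a i = b i) then XS (fun i => a i) (fun i => b i) else 0 := by
  have h := hX (fun i => a i) (fun i => b i) (fun i => a i) (fun i => b i)
  rw [merge_self, merge_self] at h
  rw [h]
  refine if_congr ?_ rfl rfl
  constructor
  · intro he i hi
    exact congrFun he ⟨i, Finset.mem_compl.mpr hi⟩
  · intro h
    funext i
    exact h i (Finset.mem_compl.mp i.2)

lemma actsOn_comm (d : Fin N → ℕ) {S A : Finset (Fin N)} (hdisj : ∀ i, i ∈ S → i ∉ A)
    {X Y : Matrix (Idx d) (Idx d) ℂ} (hX : ActsOn d S X) (hY : ActsOn d A Y) :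
    X * Y = Y * X := by
  obtain ⟨XS, hXS⟩ := hX
  obtain ⟨YA, hYA⟩ := hY
  have hXf := actsOn_apply d S hXS
  have hYf := actsOn_apply d A hYA
  ext a b
  set c₀ : Idx d := fun i => if i ∈ S then b i else a i with hc₀
  set c₁ : Idx d := fun i => if i ∈ A then b i else a i with hc₁
  have h₀ : ∀ c : Idx d, c ∈ Finset.univ → c ≠ c₀ → X a c * Y c b = 0 := by
    intro c _ hc
    by_contra hne
    have hXne : X a c ≠ 0 := left_ne_zero_of_mul hne
    have hYne : Y c b ≠ 0 := right_ne_zero_of_mul hne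
    rw [hXf] at hXne
    rw [hYf] at hYne
    have h1 : ∀ i, i ∉ S → a i = c i := by
      by_contra h; rw [if_neg h] at hXne; exact hXne rfl
    have h2 : ∀ i, i ∉ A → c i = b i := by
      by_contra h; rw [if_neg h] at hYne; exact hYne rfl
    refine hc (funext fun i => ?_)
    by_cases hi : i ∈ S
    · rw [hc₀]; simp only []
      rw [if_pos hi]
      exact h2 i (hdisj i hi)
    · rw [hc₀]; simp only []
      rw [if_neg hi]
      exact (h1 i hi).symm
  have h₁ : ∀ c : Idx d, c ∈ Finset.univ → c ≠ c₁ → Y a c * X c b = 0 := by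
    intro c _ hc
    by_contra hne
    have hYne : Y a c ≠ 0 := left_ne_zero_of_mul hne
    have hXne : X c b ≠ 0 := right_ne_zero_of_mul hne
    rw [hYf] at hYne
    rw [hXf] at hXne
    have h1 : ∀ i, i ∉ A → a i = c i := by
      by_contra h; rw [if_neg h] at hYne; exact hYne rfl
    have h2 : ∀ i, i ∉ S → c i = b i := by
      by_contra h; rw [if_neg h] at hXne; exact hXne rfl
    refine hc (funext fun i => ?_)
    by_cases hi : i ∈ A
    · rw [hc₁]; simp only []
      rw [if_pos hi]
      refine h2 i (fun hiS => hdisj i hiS hi)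
    · rw [hc₁]; simp only []
      rw [if_neg hi]
      exact (h1 i hi).symm
  rw [Matrix.mul_apply, Matrix.mul_apply,
    Finset.sum_eq_single_of_mem c₀ (Finset.mem_univ _) h₀,
    Finset.sum_eq_single_of_mem c₁ (Finset.mem_univ _) h₁,
    hXf a c₀, hYf c₀ b, hYf a c₁, hXf c₁ b]
  have t1 : ∀ i, i ∉ S → a i = c₀ i := by
    intro i hi; rw [hc₀]; simp only []; rw [if_neg hi]
  have t3 : ∀ i, i ∉ A → a i = c₁ i := by
    intro i hi; rw [hc₁]; simp only []; rw [if_neg hi]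
  rw [if_pos t1, if_pos t3]
  have e1 : (fun i : {x // x ∈ S} => c₀ ↑i) = (fun i : {x // x ∈ S} => b ↑i) := by
    funext i; rw [hc₀]; simp only []; rw [if_pos i.2]
  have e2 : (fun i : {x // x ∈ A} => c₀ ↑i) = (fun i : {x // x ∈ A} => a ↑i) := by
    funext i; rw [hc₀]; simp only []; exact if_neg (fun h => hdisj _ h i.2)
  have e3 : (fun i : {x // x ∈ A} => c₁ ↑i) = (fun i : {x // x ∈ A} => b ↑i) := by
    funext i; rw [hc₁]; simp only []; exact if_pos i.2
  have e4 : (fun i : {x // x ∈ S} => c₁ ↑i) = (fun i : {x // x ∈ S} => a ↑i) := by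
    funext i; rw [hc₁]; simp only []; exact if_neg (fun h => hdisj _ i.2 h)
  rw [e1, e2, e3, e4]
  have hq : (∀ i, i ∉ A → c₀ i = b i) ↔ (∀ i, i ∉ S → c₁ i = b i) := by
    simp only [hc₀, hc₁]
    constructor
    · intro h i hiS
      by_cases hiA : i ∈ A
      · simp [hiA]
      · simpa [hiS, hiA] using h i hiA
    · intro h i hiA
      by_cases hiS : i ∈ S
      · simp [hiS]
      · simpa [hiA, hiS] using h i hiS
  rw [if_congr hq rfl rfl]
  split_ifs with h
  · ring
  · simp

end Aux
lemma nbhd_fix (d : Fin N → ℕ) {S A : Finset (Fin N)} (hdisj : ∀ i, i ∈ S → i ∉ A)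
    {E Mm : Sop d} (hE : IsNeighborhoodMap d S E) (hMm : IsNeighborhoodMap d A Mm)
    {P : Matrix (Idx d) (Idx d) ℂ} (hEP : E P = P) : E (Mm P) = Mm P := by
  obtain ⟨m, Kk, hK, hEeq, -⟩ := hE
  obtain ⟨n, L, hL, hMeq, -⟩ := hMm
  rw [hEeq, hMeq]
  have hterm : ∀ (i : Fin m) (j : Fin n),
      Kk i * (L j * P * (L j)ᴴ) * (Kk i)ᴴ = L j * (Kk i * P * (Kk i)ᴴ) * (L j)ᴴ := by
    intro i j
    have h1 : Kk i * L j = L j * Kk i := actsOn_comm d hdisj (hK i) (hL j)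
    have h2 : (L j)ᴴ * (Kk i)ᴴ = (Kk i)ᴴ * (L j)ᴴ := by
      rw [← Matrix.conjTranspose_mul, ← Matrix.conjTranspose_mul, h1]
    calc Kk i * (L j * P * (L j)ᴴ) * (Kk i)ᴴ
        = (Kk i * L j) * P * ((L j)ᴴ * (Kk i)ᴴ) := by noncomm_ring
      _ = (L j * Kk i) * P * ((Kk i)ᴴ * (L j)ᴴ) := by rw [h1, h2]
      _ = L j * (Kk i * P * (Kk i)ᴴ) * (L j)ᴴ := by noncomm_ring
  calc ∑ i, Kk i * (∑ j, L j * P * (L j)ᴴ) * (Kk i)ᴴ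
      = ∑ i, ∑ j, Kk i * (L j * P * (L j)ᴴ) * (Kk i)ᴴ := by
        simp_rw [Finset.mul_sum, Finset.sum_mul]
    _ = ∑ j, ∑ i, L j * (Kk i * P * (Kk i)ᴴ) * (L j)ᴴ := by
        rw [Finset.sum_comm]; simp_rw [hterm]
    _ = ∑ j, L j * (∑ i, Kk i * P * (Kk i)ᴴ) * (L j)ᴴ := by
        simp_rw [Finset.mul_sum, Finset.sum_mul]
    _ = ∑ j, L j * P * (L j)ᴴ := by rw [← hEeq P, hEP]
  
lemma proj_density (d : Fin N → ℕ) {ψ : Idx d → ℂ} (hunit : IsUnitVec d ψ) :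
    IsDensity d (proj d ψ) := by
  constructor
  · have : proj d ψ =
        (Matrix.of fun (_ : Unit) b => (starRingEnd ℂ) (ψ b))ᴴ *
          (Matrix.of fun (_ : Unit) b => (starRingEnd ℂ) (ψ b)) := by
      ext a b
      simp [Matrix.mul_apply, proj, Matrix.conjTranspose_apply, mul_comm]
    rw [this]
    exact Matrix.posSemidef_conjTranspose_mul_self _
  · have : (proj d ψ).trace = ∑ a, (Complex.normSq (ψ a) : ℂ) := by
      simp [Matrix.trace, Matrix.diag, proj, Complex.mul_conj]
    rw [this, ← Complex.ofReal_sum, hunit, Complex.ofReal_one]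

lemma kraus_density (d : Fin N → ℕ) {m : ℕ} (Kk : Fin m → Matrix (Idx d) (Idx d) ℂ)
    (hsum : ∑ i, (Kk i)ᴴ * Kk i = 1) {ρ : Matrix (Idx d) (Idx d) ℂ}
    (hρ : IsDensity d ρ) : IsDensity d (∑ i, Kk i * ρ * (Kk i)ᴴ) := by
  constructor
  · refine Finset.sum_induction _ _ (fun a b ha hb => ha.add hb) Matrix.PosSemidef.zero
      (fun i _ => hρ.1.mul_mul_conjTranspose_same (Kk i))
  · rw [Matrix.trace_sum]
    have : ∀ i, (Kk i * ρ * (Kk i)ᴴ).trace = ((Kk i)ᴴ * Kk i * ρ).trace := fun i =>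
      Matrix.trace_mul_cycle _ _ _
    simp_rw [this]
    rw [← Matrix.trace_sum, ← Finset.sum_mul, hsum, Matrix.one_mul, hρ.2]

lemma seqComp_fix {V : Type*} [AddCommMonoid V] [Module ℂ V] :
    ∀ {T : ℕ} (E : Fin T → (V →ₗ[ℂ] V)) (x : V), (∀ t, E t x = x) → seqComp E x = x
  | 0, E, x, h => rfl
  | T + 1, E, x, h => by
    show E (Fin.last T) (seqComp (fun t => E t.castSucc) x) = x
    rw [seqComp_fix _ x (fun t => h t.castSucc), h]

lemma seqComp_cast {V : Type*} [AddCommMonoid V] [Module ℂ V] {n m : ℕ} (h : n = m)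
    (F : Fin m → (V →ₗ[ℂ] V)) :
    seqComp (fun i : Fin n => F (Fin.cast h i)) = seqComp F := by
  subst h; rfl

lemma seqComp_append {V : Type*} [AddCommMonoid V] [Module ℂ V] :
    ∀ (b a : ℕ) (F : Fin (a + b) → (V →ₗ[ℂ] V)),
      seqComp F = (seqComp fun j : Fin b => F (Fin.natAdd a j)) ∘ₗ
        (seqComp fun i : Fin a => F (Fin.castAdd b i))
  | 0, a, F => by
    have h : (fun i : Fin a => F (Fin.castAdd 0 i)) = F := rfl
    show seqComp F = LinearMap.id ∘ₗ seqComp fun i : Fin a => F (Fin.castAdd 0 i)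
    rw [LinearMap.id_comp, h]
  | b + 1, a, F => by
    have e1 : Fin.natAdd a (Fin.last b) = Fin.last (a + b) := by ext; rfl
    have e2 : ∀ j : Fin b, Fin.natAdd a j.castSucc = (Fin.natAdd a j).castSucc := by
      intro j; ext; rfl
    have e3 : ∀ i : Fin a, Fin.castAdd (b + 1) i = (Fin.castAdd b i).castSucc := by
      intro i; ext; rfl
    show F (Fin.last (a + b)) ∘ₗ seqComp (fun t : Fin (a + b) => F t.castSucc) = _
    rw [seqComp_append b a (fun t : Fin (a + b) => F t.castSucc)]
    show _ = F (Fin.natAdd a (Fin.last b)) ∘ₗ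
        (seqComp fun j : Fin b => F (Fin.natAdd a j.castSucc)) ∘ₗ
        (seqComp fun i : Fin a => F (Fin.castAdd (b + 1) i))
    rw [e1]
    rfl

lemma seqComp_split {V : Type*} [AddCommMonoid V] [Module ℂ V] {T : ℕ}
    (E : Fin T → (V →ₗ[ℂ] V)) (p : Fin T → Prop) [DecidablePred p] (x y : V)
    (hperm : ∀ π : Equiv.Perm (Fin T), seqComp (fun t => E (π t)) x = y)
    (hfix : ∀ t, ¬ p t → E t x = x) :
    ∃ (l : ℕ) (F : Fin l → (V →ₗ[ℂ] V)),
      (∀ j, ∃ t, p t ∧ F j = E t) ∧ seqComp F x = y := by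
  classical
  set a : ℕ := Fintype.card {t // ¬ p t} with ha
  set b : ℕ := Fintype.card {t // p t} with hb
  have hT : T = a + b := by
    have h := Fintype.card_congr (Equiv.sumCompl p)
    rw [Fintype.card_sum, Fintype.card_fin] at h
    omega
  set e₁ : Fin a ≃ {t // ¬ p t} := (Fintype.equivFin _).symm with he₁
  set e₂ : Fin b ≃ {t // p t} := (Fintype.equivFin _).symm with he₂
  set π' : Fin (a + b) ≃ Fin T :=
    finSumFinEquiv.symm.trans ((Equiv.sumCongr e₁ e₂).trans
      ((Equiv.sumComm _ _).trans (Equiv.sumCompl p))) with hπ'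
  have hkey := hperm ((finCongr hT).trans π')
  have hcst : (fun t : Fin T => E (((finCongr hT).trans π') t)) =
      (fun t : Fin T => (fun s : Fin (a+b) => E (π' s)) (Fin.cast hT t)) := rfl
  rw [hcst, seqComp_cast hT (fun s : Fin (a+b) => E (π' s)),
    seqComp_append b a (fun s : Fin (a+b) => E (π' s))] at hkey
  have hfirst : ∀ i : Fin a, E (π' (Fin.castAdd b i)) x = x := by
    intro i
    have : π' (Fin.castAdd b i) = (e₁ i : Fin T) := by
      simp [hπ', finSumFinEquiv_symm_apply_castAdd]
    rw [this]
    exact hfix _ (e₁ i).2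
  have hsecond : ∀ j : Fin b, π' (Fin.natAdd a j) = (e₂ j : Fin T) := by
    intro j
    simp [hπ', finSumFinEquiv_symm_apply_natAdd]
  rw [LinearMap.comp_apply, seqComp_fix _ x hfirst] at hkey
  refine ⟨b, fun j => E (π' (Fin.natAdd a j)), fun j => ?_, hkey⟩
  exact ⟨(e₂ j : Fin T), (e₂ j).2, by
    show E (π' (Fin.natAdd a j)) = _; rw [hsecond]⟩

/-- Theorem 7(ii), recoverability: if `ψ` is RFTS with respect to `𝒩`
and `M` is a CPTP map whose Kraus operators act only on `A`, then `|ψ⟩⟨ψ|` can be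
recovered from `M(|ψ⟩⟨ψ|)` by a finite sequence of neighborhood maps, each supported on a
neighborhood meeting `A` (hence contained in the neighborhood expansion `A^𝒩`). -/
theorem rfts_recoverability {N K : ℕ} (d : Fin N → ℕ)
    (𝒩 : Fin K → Finset (Fin N)) (ψ : Idx d → ℂ) (hunit : IsUnitVec d ψ)
    (hRFTS : RFTS d 𝒩 ψ) (A : Finset (Fin N)) (M : Sop d)
    (hM : IsNeighborhoodMap d A M) :
    ∃ (l : ℕ) (E : Fin l → Sop d),
      (∀ t, ∃ k, (𝒩 k ∩ A).Nonempty ∧ IsNeighborhoodMap d (𝒩 k) (E t)) ∧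
      seqComp E (M (proj d ψ)) = proj d ψ := by
  classical
  obtain ⟨T, E, hnbhd, hfixψ, hperm⟩ := hRFTS
  have hPden : IsDensity d (proj d ψ) := proj_density d hunit
  obtain ⟨n, L, hL, hMeq, hLsum⟩ := hM
  have hMPden : IsDensity d (M (proj d ψ)) := by
    rw [hMeq]; exact kraus_density d L hLsum hPden
  set p : Fin T → Prop :=
    fun t => ∃ k, (𝒩 k ∩ A).Nonempty ∧ IsNeighborhoodMap d (𝒩 k) (E t) with hp
  have hfix : ∀ t, ¬ p t → E t (M (proj d ψ)) = M (proj d ψ) := by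
    intro t hpt
    obtain ⟨k, hk⟩ := hnbhd t
    have hmeet : ¬ (𝒩 k ∩ A).Nonempty := fun hne => hpt ⟨k, hne, hk⟩
    have hdisj : ∀ i, i ∈ 𝒩 k → i ∉ A := fun i hi hiA =>
      hmeet ⟨i, Finset.mem_inter.mpr ⟨hi, hiA⟩⟩
    exact nbhd_fix d hdisj hk ⟨n, L, hL, hMeq, hLsum⟩ (hfixψ t)
  obtain ⟨l, F, hF, hseq⟩ := seqComp_split E p (M (proj d ψ)) (proj d ψ)
    (fun π => hperm π (M (proj d ψ)) hMPden) hfix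
  refine ⟨l, F, fun j => ?_, hseq⟩
  obtain ⟨t, ⟨k, hkmeet, hknbhd⟩, hFj⟩ := hF j
  exact ⟨k, hkmeet, hFj ▸ hknbhd⟩

end QLS
end
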